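/- Let m be a natural number, s_0,…,s_m, w_0,…,w_m, f_0,…,f_m ∈ ℂ, and let μ, ν be natural numbers with μ ≤ m and ν ≤ m. Suppose ∑_{k=0}^m w_k f_k s_k^l = 0 for all l < μ with ∑_{k=0}^m w_k f_k s_k^μ ≠ 0, and ∑_{k=0}^m w_k s_k^l = 0 for all l < ν with ∑_{k=0}^m w_k s_k^ν ≠ 0. Then, letting r(s) = (∑_{k=0}^m w_k f_k/(s − s_k)) / (∑_{k=0}^m w_k/(s − s_k)), the function s ↦ r(s)·s^{(μ:ℤ)−ν} tends to (∑_{k=0}^m w_k f_k s_k^μ)/(∑_{k=0}^m w_k s_k^ν) as s → ∞ in ℂ (along the cobounded filter). In particular r(s) = O(s^{ν−μ}) as s → ∞, i.e., the relative degree of r is ν − μ. -/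

import Mathlib

open Filter Bornology

lemma aux_id (m μ : ℕ) (s c : ℕ → ℂ)
    (h0 : ∀ l < μ, ∑ k ∈ Finset.range (m + 1), c k * s k ^ l = 0) :
    ∀ z : ℂ, (∀ k ∈ Finset.range (m + 1), z ≠ s k) →
      (∑ k ∈ Finset.range (m + 1), c k / (z - s k)) * z ^ (μ + 1)
        = ∑ k ∈ Finset.range (m + 1), c k * s k ^ μ * (z / (z - s k)) := by
  induction μ with
  | zero =>
    intro z hz
    rw [Finset.sum_mul]
    refine Finset.sum_congr rfl fun k hk => ?_
    have h : z - s k ≠ 0 := sub_ne_zero.2 (hz k hk)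
    field_simp
    simp
  | succ μ ih =>
    intro z hz
    have ih' := ih (fun l hl => h0 l (hl.trans (Nat.lt_succ_self μ))) z hz
    have e1 : (∑ k ∈ Finset.range (m + 1), c k / (z - s k)) * z ^ (μ + 2)
        = (∑ k ∈ Finset.range (m + 1), c k / (z - s k)) * z ^ (μ + 1) * z := by ring
    rw [e1, ih', Finset.sum_mul]
    have key : ∀ k ∈ Finset.range (m + 1),
        c k * s k ^ μ * (z / (z - s k)) * z
          = c k * s k ^ μ * z + c k * s k ^ (μ + 1) * (z / (z - s k)) := by
      intro k hk
      have h : z - s k ≠ 0 := sub_ne_zero.2 (hz k hk)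
      field_simp
      ring
    rw [Finset.sum_congr rfl key, Finset.sum_add_distrib, ← Finset.sum_mul,
      h0 μ (Nat.lt_succ_self μ), zero_mul, zero_add]

lemma aux_tendsto (m μ : ℕ) (s c : ℕ → ℂ)
    (h0 : ∀ l < μ, ∑ k ∈ Finset.range (m + 1), c k * s k ^ l = 0) :
    Tendsto (fun z : ℂ => (∑ k ∈ Finset.range (m + 1), c k / (z - s k)) * z ^ (μ + 1))
      (cobounded ℂ) (nhds (∑ k ∈ Finset.range (m + 1), c k * s k ^ μ)) := by
  have hev : ∀ᶠ z in cobounded ℂ,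
      (∑ k ∈ Finset.range (m + 1), c k * s k ^ μ * (z / (z - s k)))
        = (∑ k ∈ Finset.range (m + 1), c k / (z - s k)) * z ^ (μ + 1) := by
    have h1 : ∀ᶠ z in cobounded ℂ, ∀ k ∈ Finset.range (m + 1), z ≠ s k :=
      (Finset.range (m + 1)).eventually_all.2 fun k _ => eventually_ne_cobounded (s k)
    filter_upwards [h1] with z hz
    exact (aux_id m μ s c h0 z hz).symm
  refine Tendsto.congr' hev ?_
  refine tendsto_finset_sum _ fun k _ => ?_
  have h1 : Tendsto (fun z : ℂ => (z - s k) / z) (cobounded ℂ) (nhds 1) := by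
    have : Tendsto (fun z : ℂ => 1 - s k * z⁻¹) (cobounded ℂ) (nhds (1 - s k * 0)) :=
      tendsto_const_nhds.sub (tendsto_const_nhds.mul tendsto_inv₀_cobounded)
    simp only [mul_zero, sub_zero] at this
    refine this.congr' ?_
    filter_upwards [eventually_ne_cobounded (0 : ℂ)] with z hz
    field_simp
  have h2 : Tendsto (fun z : ℂ => z / (z - s k)) (cobounded ℂ) (nhds 1) := by
    have := h1.inv₀ one_ne_zero
    simp only [inv_one, inv_div] at this
    exact this
  simpa using h2.const_mul (c k * s k ^ μ)

/-- Relative-degree conclusion of the paper's Theorem 3.2: the interpolatory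
barycentric rational function `r` satisfies `r(s) ~ c · s^(ν-μ)` as `s → ∞`,
so that its relative degree is `ν - μ`. -/
theorem barycentric_relative_degree (m : ℕ) (s w f : ℕ → ℂ) (μ ν : ℕ)
    (hμ : μ ≤ m) (hν : ν ≤ m)
    (hnum0 : ∀ l < μ, ∑ k ∈ Finset.range (m + 1), w k * f k * s k ^ l = 0)
    (hnum : ∑ k ∈ Finset.range (m + 1), w k * f k * s k ^ μ ≠ 0)
    (hden0 : ∀ l < ν, ∑ k ∈ Finset.range (m + 1), w k * s k ^ l = 0)
    (hden : ∑ k ∈ Finset.range (m + 1), w k * s k ^ ν ≠ 0)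
    (r : ℂ → ℂ)
    (hr : ∀ z : ℂ, r z = (∑ k ∈ Finset.range (m + 1), w k * f k / (z - s k)) /
      (∑ k ∈ Finset.range (m + 1), w k / (z - s k))) :
    Filter.Tendsto (fun z : ℂ => r z * z ^ ((μ : ℤ) - ν)) (Bornology.cobounded ℂ)
      (nhds ((∑ k ∈ Finset.range (m + 1), w k * f k * s k ^ μ) /
        (∑ k ∈ Finset.range (m + 1), w k * s k ^ ν))) ∧
    r =O[Bornology.cobounded ℂ] fun z : ℂ => z ^ ((ν : ℤ) - μ) := by
  have tnum := aux_tendsto m μ s (fun k => w k * f k) hnum0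
  have tden := aux_tendsto m ν s w hden0
  have hdiv := tnum.div tden hden
  have htend : Filter.Tendsto (fun z : ℂ => r z * z ^ ((μ : ℤ) - ν)) (cobounded ℂ)
      (nhds ((∑ k ∈ Finset.range (m + 1), w k * f k * s k ^ μ) /
        (∑ k ∈ Finset.range (m + 1), w k * s k ^ ν))) := by
    refine hdiv.congr' ?_
    filter_upwards [eventually_ne_cobounded (0 : ℂ)] with z hz
    rw [hr z]
    have hzpow : z ^ ((μ : ℤ) - ν) = z ^ (μ + 1) / z ^ (ν + 1) := by
      rw [show ((μ : ℤ) - ν) = ((μ + 1 : ℕ) : ℤ) - ((ν + 1 : ℕ) : ℤ) by push_cast; ring,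
        zpow_sub₀ hz, zpow_natCast, zpow_natCast]
    rw [hzpow, div_mul_div_comm]
    rfl
  refine ⟨htend, ?_⟩
  have h1 : (fun z : ℂ => r z * z ^ ((μ : ℤ) - ν)) =O[cobounded ℂ] (fun _ => (1 : ℂ)) :=
    htend.isBigO_one ℂ
  have h2 := h1.mul (Asymptotics.isBigO_refl (fun z : ℂ => z ^ ((ν : ℤ) - μ)) (cobounded ℂ))
  have heq : (fun z : ℂ => (r z * z ^ ((μ : ℤ) - ν)) * z ^ ((ν : ℤ) - μ)) =ᶠ[cobounded ℂ] r := by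
    filter_upwards [eventually_ne_cobounded (0 : ℂ)] with z hz
    rw [mul_assoc, ← zpow_add₀ hz]
    simp
  exact h2.congr' heq (Filter.EventuallyEq.of_eq (funext fun z => one_mul _))
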